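/- For any α ∈ ℕ_0^N, the rank function satisfies r_{Φα} = r_α ∘ w_0, where Φα = (α_2, α_3, ..., α_N, α_1 + 1) and w_0 is the N-cycle (1,2,...,N) with w_0(i) = i+1 for i < N and w_0(N) = 1. -/
import Mathlib


theorem rank_of_affine_step (N : ℕ) (hN : 0 < N) (α Φα : Fin N → ℕ)
    (w₀ : Fin N → Fin N)
    (hΦ : ∀ i : Fin N, Φα i = if h : (i : ℕ) + 1 < N then α ⟨(i : ℕ) + 1, h⟩ else α ⟨0, hN⟩ + 1)
    (hw : ∀ i : Fin N, (w₀ i : ℕ) = if (i : ℕ) + 1 < N then (i : ℕ) + 1 else 0)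
    (rk : (Fin N → ℕ) → Fin N → ℕ)
    (hrk : ∀ (β : Fin N → ℕ) (i : Fin N),
      rk β i = (Finset.univ.filter (fun j : Fin N => β j > β i)).card
        + (Finset.univ.filter (fun j : Fin N => j ≤ i ∧ β j = β i)).card) :
    ∀ i : Fin N, rk Φα i = rk α (w₀ i) := by
  have hval : ∀ j : Fin N, Φα j = if (j : ℕ) + 1 < N then α (w₀ j) else α (w₀ j) + 1 := by
    intro j
    rw [hΦ j]
    split_ifs with h
    · congr 1; apply Fin.ext; simp [hw j, h]
    · congr 2; apply Fin.ext; simp [hw j, h]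
  have hinj : Function.Injective w₀ := by
    intro a b hab
    have h1 := hw a
    have h2 := hw b
    rw [hab, h2] at h1
    have ha2 := a.2
    have hb2 := b.2
    apply Fin.ext
    split_ifs at h1 <;> omega
  have hsurj : Function.Surjective w₀ := Finite.injective_iff_surjective.mp hinj
  have hcomb : ∀ (β : Fin N → ℕ) (k : Fin N), rk β k =
      (Finset.univ.filter (fun j : Fin N => β j > β k ∨ (j ≤ k ∧ β j = β k))).card := by
    intro β k
    rw [hrk, Finset.filter_or, Finset.card_union_of_disjoint]
    rw [Finset.disjoint_left]
    intro j hj hj'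
    simp only [Finset.mem_filter] at hj hj'
    omega
  intro i
  have hpt : ∀ j : Fin N, (Φα j > Φα i ∨ (j ≤ i ∧ Φα j = Φα i)) ↔
      (α (w₀ j) > α (w₀ i) ∨ (w₀ j ≤ w₀ i ∧ α (w₀ j) = α (w₀ i))) := by
    intro j
    rw [hval j, hval i, Fin.le_def, Fin.le_def, hw j, hw i]
    have hj2 := j.2
    have hi2 := i.2
    split_ifs <;> omega
  rw [hcomb Φα i, hcomb α (w₀ i)]
  have hset : (Finset.univ.filter (fun j : Fin N => Φα j > Φα i ∨ (j ≤ i ∧ Φα j = Φα i)))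
      = Finset.univ.filter
        (fun j : Fin N => α (w₀ j) > α (w₀ i) ∨ (w₀ j ≤ w₀ i ∧ α (w₀ j) = α (w₀ i))) := by
    ext j
    simp only [Finset.mem_filter, Finset.mem_univ, true_and]
    exact hpt j
  rw [hset]
  apply Finset.card_bij (fun j _ => w₀ j)
  · intro a ha
    simp only [Finset.mem_filter, Finset.mem_univ, true_and] at ha ⊢
    exact ha
  · intro a _ b _ h
    exact hinj h
  · intro b hb
    obtain ⟨a, rfl⟩ := hsurj b
    simp only [Finset.mem_filter, Finset.mem_univ, true_and] at hb
    exact ⟨a, by simp [Finset.mem_filter, hb], rfl⟩
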